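/- Let z₁, z₂ be complex numbers and let M be the real 2 × 2 matrix whose rows are (Re z₁, Im z₁) and (Re z₂, Im z₂). Then the smallest singular value of M satisfies σ_min(M)² = ½·(|z₁|² + |z₂|² − |z₁² + z₂²|). Equivalently, the minimum over unit vectors x ∈ ℝ² of (⟨(Re z₁, Im z₁), x⟩² + ⟨(Re z₂, Im z₂), x⟩²) equals ½·(|z₁|² + |z₂|² − |z₁² + z₂²|). -/

import Mathlib

open Complex

private lemma neg_le_of_sq_le_sq' (S R : ℝ) (h : S ^ 2 ≤ R ^ 2) (hR : 0 ≤ R) :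
    -R ≤ S := by nlinarith


/-- For complex numbers `z₁, z₂`, let `M` be the real `2 × 2` matrix whose rows are
`(Re z₁, Im z₁)` and `(Re z₂, Im z₂)`. The squared smallest singular value of `M`,
i.e. the minimum over unit vectors `x ∈ ℝ²` of `⟨row₁, x⟩² + ⟨row₂, x⟩²`, equals
`½ (|z₁|² + |z₂|² − |z₁² + z₂²|)`. -/
theorem sigma_min_sq_eq (z₁ z₂ : ℂ) :
    IsLeast
      { t : ℝ | ∃ x : ℝ × ℝ, x.1 ^ 2 + x.2 ^ 2 = 1 ∧
          t = (z₁.re * x.1 + z₁.im * x.2) ^ 2 + (z₂.re * x.1 + z₂.im * x.2) ^ 2 }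
      ((1 / 2) * (‖z₁‖ ^ 2 + ‖z₂‖ ^ 2
        - ‖z₁ ^ 2 + z₂ ^ 2‖)) := by
  set a := z₁.re with ha
  set b := z₁.im with hb
  set c := z₂.re with hc
  set d := z₂.im with hd
  set w : ℂ := z₁ ^ 2 + z₂ ^ 2 with hw
  have hwre : w.re = a ^ 2 - b ^ 2 + (c ^ 2 - d ^ 2) := by
    simp only [hw, pow_two, Complex.add_re, Complex.mul_re, ← ha, ← hb, ← hc, ← hd]
    try ring
  have hwim : w.im = 2 * (a * b) + 2 * (c * d) := by
    simp only [hw, pow_two, Complex.add_im, Complex.mul_im, ← ha, ← hb, ← hc, ← hd]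
    ring
  have habs1 : ‖z₁‖ ^ 2 = a ^ 2 + b ^ 2 := by
    rw [Complex.sq_norm, Complex.normSq_apply]; ring
  have habs2 : ‖z₂‖ ^ 2 = c ^ 2 + d ^ 2 := by
    rw [Complex.sq_norm, Complex.normSq_apply]; ring
  set R := ‖w‖ with hR
  have hR0 : 0 ≤ R := norm_nonneg w
  have hRsq : R ^ 2 = w.re ^ 2 + w.im ^ 2 := by
    rw [hR, Complex.sq_norm, Complex.normSq_apply]; ring
  clear_value a b c d
  clear_value R
  clear_value w
  constructor
  · by_cases hw0 : w = 0
    · refine ⟨(1, 0), by norm_num, ?_⟩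
      have h1 : w.re = 0 := by rw [hw0]; simp
      have h2 : R = 0 := by rw [hR, hw0]; simp
      rw [habs1, habs2, h2, hwre] at *
      simp only [mul_one, mul_zero, add_zero]
      nlinarith [h1]
    · have hRpos : 0 < R := hR ▸ norm_pos_iff.mpr hw0
      set v : ℂ := (-w / (R : ℂ)) ^ ((2 : ℕ)⁻¹ : ℂ) with hv
      have hv2 : v ^ (2 : ℕ) = -w / (R : ℂ) :=
        Complex.cpow_nat_inv_pow _ two_ne_zero
      have hRne : (R : ℂ) ≠ 0 := by
        exact_mod_cast hRpos.ne'
      have hv2' : v ^ (2 : ℕ) * (R : ℂ) = -w := by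
        rw [hv2]; field_simp
      have habsv : ‖v‖ = 1 := by
        have h1 : ‖v‖ ^ 2 * R = R := by
          have := congrArg norm hv2'
          rwa [norm_mul, norm_pow, norm_neg, Complex.norm_real, Real.norm_eq_abs,
            abs_of_pos hRpos, ← hR] at this
        have h2 : ‖v‖ ^ 2 = 1 :=
          mul_right_cancel₀ hRpos.ne' (by rw [h1, one_mul])
        nlinarith [norm_nonneg v]
      set p := v.re with hp
      set q := v.im with hq
      have hunit : p ^ 2 + q ^ 2 = 1 := by
        have h := Complex.sq_norm v
        rw [habsv, Complex.normSq_apply] at h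
        simp only [one_pow] at h
        rw [pow_two, pow_two]; linarith [h]
      have hre := congrArg Complex.re hv2'
      have him := congrArg Complex.im hv2'
      simp only [pow_two, Complex.mul_re, Complex.mul_im, Complex.ofReal_re,
        Complex.ofReal_im, Complex.neg_re, Complex.neg_im, mul_zero, sub_zero,
        zero_mul, add_zero, ← hp, ← hq] at hre him
      -- hre : (p*p - q*q) * R = -w.re ; him : (p*q + q*p) * R = -w.im
      have e1 : R * (p ^ 2 - q ^ 2) = -w.re := by rw [pow_two, pow_two]; linarith [hre]
      have e2 : R * (2 * (p * q)) = -w.im := by linarith [him]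
      clear_value p q
      clear hre him hv2 hv2' hv habsv hp hq v hRne
      refine ⟨(p, q), hunit, ?_⟩
      simp only
      have key : 2 * ((a * p + b * q) ^ 2 + (c * p + d * q) ^ 2) =
          (a ^ 2 + b ^ 2 + c ^ 2 + d ^ 2) * (p ^ 2 + q ^ 2)
          + (a ^ 2 - b ^ 2 + (c ^ 2 - d ^ 2)) * (p ^ 2 - q ^ 2)
          + (2 * (a * b) + 2 * (c * d)) * (2 * (p * q)) := by ring
      have hS : w.re * (p ^ 2 - q ^ 2) + w.im * (2 * (p * q)) = -R := by
        have h1 : R * (w.re * (p ^ 2 - q ^ 2) + w.im * (2 * (p * q))) = R * (-R) := by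
          linear_combination w.re * e1 + w.im * e2 + hRsq
        exact mul_left_cancel₀ hRpos.ne' h1
      rw [habs1, habs2]
      rw [hunit, mul_one, ← hwre, ← hwim] at key
      linarith [key, hS]
  · rintro t ⟨⟨p, q⟩, hx, ht⟩
    simp only at hx ht
    have key : 2 * ((a * p + b * q) ^ 2 + (c * p + d * q) ^ 2) =
        (a ^ 2 + b ^ 2 + c ^ 2 + d ^ 2) * (p ^ 2 + q ^ 2)
        + (a ^ 2 - b ^ 2 + (c ^ 2 - d ^ 2)) * (p ^ 2 - q ^ 2)
        + (2 * (a * b) + 2 * (c * d)) * (2 * (p * q)) := by ring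
    rw [hx, mul_one, ← hwre, ← hwim] at key
    have hXY : (p ^ 2 - q ^ 2) ^ 2 + (2 * (p * q)) ^ 2 = 1 := by
      have : (p ^ 2 - q ^ 2) ^ 2 + (2 * (p * q)) ^ 2 = (p ^ 2 + q ^ 2) ^ 2 := by ring
      rw [this, hx, one_pow]
    set S := w.re * (p ^ 2 - q ^ 2) + w.im * (2 * (p * q)) with hSdef
    have hdiff : R ^ 2 - S ^ 2 =
        (w.re * (2 * (p * q)) - w.im * (p ^ 2 - q ^ 2)) ^ 2 := by
      rw [hSdef]
      linear_combination hRsq - (w.re ^ 2 + w.im ^ 2) * hXY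
    have hS2 : S ^ 2 ≤ R ^ 2 := by
      linarith [hdiff, sq_nonneg (w.re * (2 * (p * q)) - w.im * (p ^ 2 - q ^ 2))]
    have hSge : -R ≤ S := neg_le_of_sq_le_sq' _ _ hS2 hR0
    rw [habs1, habs2, ht]
    linarith [key, hSge]
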